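/- Let (φ^k)_{k≥0} be real polynomials with moments Î_k^l = ∫_{−1}^{1} ζ^l φ^k(ζ) dζ. For integers p ≥ 0, q with |q| ≤ p, m ≥ 0 and a multi-index k = (k1,k2,k3), the integral I_m(p,q,k) = ∫_{[−1,1]³} T_{p,m}^q(x1,x2,x3) φ^{k1}(x1) φ^{k2}(x2) φ^{k3}(x3) dx satisfies I_m(p,q,k) = (s·i)^{|q|} I_m^{(1)}(p,q,k) + (s·i)^{|q|+1} I_m^{(2)}(p,q,k), where I_m^{(1)}(p,q,k) = Σ_{μ=0}^{⌊|q|/2⌋} (−1)^μ C(|q|,2μ) Σ_{ν=0}^{⌊(p−|q|)/2⌋} b_ν Σ_{α=0}^{m+ν} C(m+ν,α) Î_{k3}^{p−|q|+2m−2α} Σ_{β=0}^{α} C(α,β) Î_{k2}^{|q|+2β−2μ} Î_{k1}^{2α−2β+2μ}, and I_m^{(2)}(p,q,k) = Σ_{μ=0}^{⌊(|q|−1)/2⌋} (−1)^μ C(|q|,2μ+1) Σ_{ν=0}^{⌊(p−|q|)/2⌋} b_ν Σ_{α=0}^{m+ν} C(m+ν,α) Î_{k3}^{p−|q|+2m−2α}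 Σ_{β=0}^{α} C(α,β) Î_{k2}^{|q|+2β−2μ−1} Î_{k1}^{2α−2β+2μ+1}, with b_ν = ((−1)^ν/2^ν) (2p−2ν−1)!!/(ν! (p−|q|−2ν)!) and the sum defining I_m^{(2)} empty when q = 0. -/

import Mathlib

/-- The Cartesian polynomial `T_{p,m}^q(x,y,z)`, the complex conjugate of
`R_{p,m}^q(x) = ‖x‖^{2m+p} Y_p^q(x/‖x‖) / C_Y(p,q)` (a regular solid harmonic
weighted by `‖x‖^{2m}`). Here `s = 1` if `q ≥ 0` and `s = -1` if `q < 0`. -/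
noncomputable def solidT (p m : ℕ) (q : ℤ) (x y z : ℝ) : ℂ :=
  ((-1 : ℂ) ^ q.natAbs / 2 ^ p) *
    ((x : ℂ) - (if 0 ≤ q then (1 : ℂ) else -1) * Complex.I * (y : ℂ)) ^ q.natAbs *
    ∑ ν ∈ Finset.range ((p - q.natAbs) / 2 + 1),
      ((-1 : ℂ) ^ ν * (Nat.factorial (2 * p - 2 * ν) : ℂ) /
          ((Nat.factorial ν : ℂ) * (Nat.factorial (p - ν) : ℂ) *
            (Nat.factorial (p - q.natAbs - 2 * ν) : ℂ))) *
        (((x ^ 2 + y ^ 2 + z ^ 2 : ℝ) : ℂ)) ^ (m + ν) * (z : ℂ) ^ (p - q.natAbs - 2 * ν)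

/-- The integral `I_m(p,q,k) = ∫_{[-1,1]³} T_{p,m}^q(x₁,x₂,x₃) φ^{k₁}(x₁) φ^{k₂}(x₂) φ^{k₃}(x₃) dx`. -/
noncomputable def solidI (φ : ℕ → Polynomial ℝ) (p m : ℕ) (q : ℤ) (k₁ k₂ k₃ : ℕ) : ℂ :=
  ∫ x₁ in (-1:ℝ)..1, ∫ x₂ in (-1:ℝ)..1, ∫ x₃ in (-1:ℝ)..1,
    solidT p m q x₁ x₂ x₃ *
      (((φ k₁).eval x₁ * (φ k₂).eval x₂ * (φ k₃).eval x₃ : ℝ) : ℂ)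

/-- The moments `Î_k^l = ∫_{-1}^1 ζ^l φ^k(ζ) dζ`. -/
noncomputable def momentI (φ : ℕ → Polynomial ℝ) (k l : ℕ) : ℝ :=
  ∫ ζ in (-1:ℝ)..1, ζ ^ l * (φ k).eval ζ

/-- The coefficient `b_ν = ((-1)^ν/2^ν) (2p-2ν-1)!! / (ν! (p-|q|-2ν)!)`,
with the convention `(-1)!! = 1`. -/
noncomputable def bcoef (p : ℕ) (q : ℤ) (ν : ℕ) : ℝ :=
  ((-1 : ℝ) ^ ν / 2 ^ ν) * (Nat.doubleFactorial (2 * p - 2 * ν - 1) : ℝ) /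
    ((Nat.factorial ν : ℝ) * (Nat.factorial (p - q.natAbs - 2 * ν) : ℝ))

/-- The real part `I_m^{(1)}(p,q,k)` of the formula for `I_m`. -/
noncomputable def solidI1 (φ : ℕ → Polynomial ℝ) (p m : ℕ) (q : ℤ) (k₁ k₂ k₃ : ℕ) : ℝ :=
  ∑ μ ∈ Finset.range (q.natAbs / 2 + 1),
    (-1 : ℝ) ^ μ * (Nat.choose q.natAbs (2 * μ) : ℝ) *
    ∑ ν ∈ Finset.range ((p - q.natAbs) / 2 + 1),
      bcoef p q ν *
      ∑ α ∈ Finset.range (m + ν + 1),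
        (Nat.choose (m + ν) α : ℝ) * momentI φ k₃ (p - q.natAbs + 2 * m - 2 * α) *
        ∑ β ∈ Finset.range (α + 1),
          (Nat.choose α β : ℝ) * momentI φ k₂ (q.natAbs + 2 * β - 2 * μ) *
            momentI φ k₁ (2 * α - 2 * β + 2 * μ)

/-- The part `I_m^{(2)}(p,q,k)` of the formula for `I_m`; the outer sum
(over `0 ≤ μ ≤ ⌊(|q|-1)/2⌋`) is empty when `q = 0`. -/
noncomputable def solidI2 (φ : ℕ → Polynomial ℝ) (p m : ℕ) (q : ℤ) (k₁ k₂ k₃ : ℕ) : ℝ :=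
  ∑ μ ∈ Finset.range ((q.natAbs + 1) / 2),
    (-1 : ℝ) ^ μ * (Nat.choose q.natAbs (2 * μ + 1) : ℝ) *
    ∑ ν ∈ Finset.range ((p - q.natAbs) / 2 + 1),
      bcoef p q ν *
      ∑ α ∈ Finset.range (m + ν + 1),
        (Nat.choose (m + ν) α : ℝ) * momentI φ k₃ (p - q.natAbs + 2 * m - 2 * α) *
        ∑ β ∈ Finset.range (α + 1),
          (Nat.choose α β : ℝ) * momentI φ k₂ (q.natAbs + 2 * β - 2 * μ - 1) *
            momentI φ k₁ (2 * α - 2 * β + 2 * μ + 1)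


lemma sum_even_odd {M : Type*} [AddCommMonoid M] (f : ℕ → M) (n : ℕ) :
    ∑ j ∈ Finset.range n, f j
      = (∑ μ ∈ Finset.range ((n+1)/2), f (2*μ)) + ∑ μ ∈ Finset.range (n/2), f (2*μ+1) := by
  induction n with
  | zero => simp
  | succ n ih =>
    rcases Nat.even_or_odd n with ⟨k, hk⟩ | ⟨k, hk⟩
    · subst hk
      rw [Finset.sum_range_succ, ih,
        show (k+k+1+1)/2 = k+1 by omega, show (k+k+1)/2 = k by omega,
        show (k+k)/2 = k by omega,
        Finset.sum_range_succ (f := fun μ => f (2*μ)), show 2*k = k+k by omega]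
      abel
    · subst hk
      rw [Finset.sum_range_succ, ih,
        show (2*k+1+1+1)/2 = k+1 by omega, show (2*k+1+1)/2 = k+1 by omega,
        show (2*k+1)/2 = k by omega,
        Finset.sum_range_succ (f := fun μ => f (2*μ+1))]
      abel

lemma nat_fact_dfact (n : ℕ) :
    Nat.factorial (2*n) = 2^n * Nat.factorial n * Nat.doubleFactorial (2*n - 1) := by
  cases n with
  | zero => simp [Nat.doubleFactorial]
  | succ k =>
    have h1 : 2 * (k+1) = (2*k+1) + 1 := by ring
    rw [h1, Nat.factorial_eq_mul_doubleFactorial, show (2*k+1)+1 = 2*(k+1) by ring,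
      Nat.doubleFactorial_two_mul, show 2*(k+1) - 1 = 2*k+1 by omega]

lemma triple_integral {ι : Type*} (S : Finset ι) (c : ι → ℂ) (e₁ e₂ e₃ : ι → ℕ)
    (P₁ P₂ P₃ : Polynomial ℝ) :
    (∫ x₁ in (-1:ℝ)..1, ∫ x₂ in (-1:ℝ)..1, ∫ x₃ in (-1:ℝ)..1,
      ∑ i ∈ S, c i * ((x₁ ^ e₁ i * P₁.eval x₁ : ℝ) : ℂ) * ((x₂ ^ e₂ i * P₂.eval x₂ : ℝ) : ℂ) *
        ((x₃ ^ e₃ i * P₃.eval x₃ : ℝ) : ℂ))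
    = ∑ i ∈ S, c i * ((∫ t in (-1:ℝ)..1, t ^ e₁ i * P₁.eval t : ℝ) : ℂ) *
        ((∫ t in (-1:ℝ)..1, t ^ e₂ i * P₂.eval t : ℝ) : ℂ) *
        ((∫ t in (-1:ℝ)..1, t ^ e₃ i * P₃.eval t : ℝ) : ℂ) := by
  have cont : ∀ (e : ℕ) (P : Polynomial ℝ),
      Continuous fun t : ℝ => ((t ^ e * P.eval t : ℝ) : ℂ) := fun e P =>
    Complex.continuous_ofReal.comp ((continuous_pow e).mul P.continuous)
  have h3 : ∀ x₁ x₂ : ℝ,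
      (∫ x₃ in (-1:ℝ)..1, ∑ i ∈ S,
        c i * ((x₁ ^ e₁ i * P₁.eval x₁ : ℝ) : ℂ) * ((x₂ ^ e₂ i * P₂.eval x₂ : ℝ) : ℂ) *
          ((x₃ ^ e₃ i * P₃.eval x₃ : ℝ) : ℂ))
      = ∑ i ∈ S, c i * ((x₁ ^ e₁ i * P₁.eval x₁ : ℝ) : ℂ) * ((x₂ ^ e₂ i * P₂.eval x₂ : ℝ) : ℂ) *
          ((∫ t in (-1:ℝ)..1, t ^ e₃ i * P₃.eval t : ℝ) : ℂ) := by
    intro x₁ x₂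
    rw [intervalIntegral.integral_finset_sum (fun i _ =>
      ((continuous_const.mul (cont (e₃ i) P₃)).intervalIntegrable _ _))
        (f := fun i (x₃ : ℝ) => c i * ((x₁ ^ e₁ i * P₁.eval x₁ : ℝ) : ℂ) *
            ((x₂ ^ e₂ i * P₂.eval x₂ : ℝ) : ℂ) * ((x₃ ^ e₃ i * P₃.eval x₃ : ℝ) : ℂ))]
    exact Finset.sum_congr rfl fun i _ => by
      rw [intervalIntegral.integral_const_mul, intervalIntegral.integral_ofReal]
  have h2 : ∀ x₁ : ℝ,
      (∫ x₂ in (-1:ℝ)..1, ∑ i ∈ S,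
        c i * ((x₁ ^ e₁ i * P₁.eval x₁ : ℝ) : ℂ) * ((x₂ ^ e₂ i * P₂.eval x₂ : ℝ) : ℂ) *
          ((∫ t in (-1:ℝ)..1, t ^ e₃ i * P₃.eval t : ℝ) : ℂ))
      = ∑ i ∈ S, c i * ((x₁ ^ e₁ i * P₁.eval x₁ : ℝ) : ℂ) *
          ((∫ t in (-1:ℝ)..1, t ^ e₂ i * P₂.eval t : ℝ) : ℂ) *
          ((∫ t in (-1:ℝ)..1, t ^ e₃ i * P₃.eval t : ℝ) : ℂ) := by
    intro x₁
    rw [intervalIntegral.integral_finset_sum (fun i _ =>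
      (((continuous_const.mul (cont (e₂ i) P₂)).mul continuous_const).intervalIntegrable _ _))
        (f := fun i (x₂ : ℝ) => c i * ((x₁ ^ e₁ i * P₁.eval x₁ : ℝ) : ℂ) *
            ((x₂ ^ e₂ i * P₂.eval x₂ : ℝ) : ℂ) *
            ((∫ t in (-1:ℝ)..1, t ^ e₃ i * P₃.eval t : ℝ) : ℂ))]
    refine Finset.sum_congr rfl fun i _ => ?_
    have key : ∀ x₂ : ℝ, c i * ((x₁ ^ e₁ i * P₁.eval x₁ : ℝ) : ℂ) *
          ((x₂ ^ e₂ i * P₂.eval x₂ : ℝ) : ℂ) *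
          ((∫ t in (-1:ℝ)..1, t ^ e₃ i * P₃.eval t : ℝ) : ℂ)
        = (c i * ((x₁ ^ e₁ i * P₁.eval x₁ : ℝ) : ℂ) *
            ((∫ t in (-1:ℝ)..1, t ^ e₃ i * P₃.eval t : ℝ) : ℂ)) *
          ((x₂ ^ e₂ i * P₂.eval x₂ : ℝ) : ℂ) := fun x₂ => by ring
    simp_rw [key]
    rw [intervalIntegral.integral_const_mul, intervalIntegral.integral_ofReal]
    ring
  have h1 :
      (∫ x₁ in (-1:ℝ)..1, ∑ i ∈ S,
        c i * ((x₁ ^ e₁ i * P₁.eval x₁ : ℝ) : ℂ) *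
          ((∫ t in (-1:ℝ)..1, t ^ e₂ i * P₂.eval t : ℝ) : ℂ) *
          ((∫ t in (-1:ℝ)..1, t ^ e₃ i * P₃.eval t : ℝ) : ℂ))
      = ∑ i ∈ S, c i * ((∫ t in (-1:ℝ)..1, t ^ e₁ i * P₁.eval t : ℝ) : ℂ) *
          ((∫ t in (-1:ℝ)..1, t ^ e₂ i * P₂.eval t : ℝ) : ℂ) *
          ((∫ t in (-1:ℝ)..1, t ^ e₃ i * P₃.eval t : ℝ) : ℂ) := by
    rw [intervalIntegral.integral_finset_sum (fun i _ =>
      ((((continuous_const.mul (cont (e₁ i) P₁)).mul continuous_const).mul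
        continuous_const).intervalIntegrable _ _))
        (f := fun i (x₁ : ℝ) => c i * ((x₁ ^ e₁ i * P₁.eval x₁ : ℝ) : ℂ) *
            ((∫ t in (-1:ℝ)..1, t ^ e₂ i * P₂.eval t : ℝ) : ℂ) *
            ((∫ t in (-1:ℝ)..1, t ^ e₃ i * P₃.eval t : ℝ) : ℂ))]
    refine Finset.sum_congr rfl fun i _ => ?_
    have : ∀ x₁ : ℝ, c i * ((x₁ ^ e₁ i * P₁.eval x₁ : ℝ) : ℂ) *
          ((∫ t in (-1:ℝ)..1, t ^ e₂ i * P₂.eval t : ℝ) : ℂ) *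
          ((∫ t in (-1:ℝ)..1, t ^ e₃ i * P₃.eval t : ℝ) : ℂ)
        = (c i * ((∫ t in (-1:ℝ)..1, t ^ e₂ i * P₂.eval t : ℝ) : ℂ) *
          ((∫ t in (-1:ℝ)..1, t ^ e₃ i * P₃.eval t : ℝ) : ℂ)) *
          ((x₁ ^ e₁ i * P₁.eval x₁ : ℝ) : ℂ) := fun x₁ => by ring
    simp_rw [this]
    rw [intervalIntegral.integral_const_mul, intervalIntegral.integral_ofReal]
    ring
  simp_rw [h3, h2]
  exact h1

def Sidx (p m : ℕ) (q : ℤ) : Finset ((ℕ×ℕ)×(ℕ×ℕ)) :=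
  (Finset.range (q.natAbs+1) ×ˢ Finset.range ((p-q.natAbs)/2+1)) ×ˢ
  (Finset.range (m+(p-q.natAbs)/2+1) ×ˢ Finset.range (m+(p-q.natAbs)/2+1))

def E1x (i : (ℕ×ℕ)×(ℕ×ℕ)) : ℕ := i.1.1 + 2*(i.2.1 - i.2.2)
def E2x (q : ℤ) (i : (ℕ×ℕ)×(ℕ×ℕ)) : ℕ := (q.natAbs - i.1.1) + 2*i.2.2
def E3x (p m : ℕ) (q : ℤ) (i : (ℕ×ℕ)×(ℕ×ℕ)) : ℕ :=
  (p - q.natAbs - 2*i.1.2) + 2*(m + i.1.2 - i.2.1)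

noncomputable def Kcx (p m : ℕ) (q : ℤ) (i : (ℕ×ℕ)×(ℕ×ℕ)) : ℂ :=
  ((-1:ℂ)^q.natAbs / 2^p) * (Nat.choose q.natAbs i.1.1 : ℂ) *
    (-((if 0 ≤ q then (1:ℂ) else -1) * Complex.I))^(q.natAbs - i.1.1) *
    ((-1:ℂ)^i.1.2 * (Nat.factorial (2*p - 2*i.1.2) : ℂ) /
      ((Nat.factorial i.1.2 : ℂ) * (Nat.factorial (p - i.1.2) : ℂ) *
        (Nat.factorial (p - q.natAbs - 2*i.1.2) : ℂ))) *
    (Nat.choose (m + i.1.2) i.2.1 : ℂ) * (Nat.choose i.2.1 i.2.2 : ℂ)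

lemma solidT_expand (p m : ℕ) (q : ℤ) (x y z u v w : ℝ) :
    solidT p m q x y z * ((u * v * w : ℝ) : ℂ)
      = ∑ i ∈ Sidx p m q, Kcx p m q i *
          ((x ^ E1x i * u : ℝ) : ℂ) * ((y ^ E2x q i * v : ℝ) : ℂ) *
          ((z ^ E3x p m q i * w : ℝ) : ℂ) := by
  set a := q.natAbs with ha
  set W : ℂ := (if 0 ≤ q then (1:ℂ) else -1) * Complex.I with hW
  set P := (p - a)/2 with hP
  set M := m + P with hM
  have hbin : ((x:ℂ) - W*y)^a
      = ∑ j ∈ Finset.range (a+1), (x:ℂ)^j * ((-W)^(a-j) * (y:ℂ)^(a-j)) * (Nat.choose a j : ℂ) := by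
    rw [sub_eq_add_neg, add_pow]
    exact Finset.sum_congr rfl fun j _ => by rw [← neg_mul, mul_pow]
  have hpow : ∀ ν ∈ Finset.range (P+1),
      (((x^2+y^2+z^2 : ℝ)):ℂ)^(m+ν)
        = ∑ α ∈ Finset.range (M+1), ∑ β ∈ Finset.range (M+1),
            ((y:ℂ)^2)^β * ((x:ℂ)^2)^(α-β) * (Nat.choose α β : ℂ) *
              ((z:ℂ)^2)^(m+ν-α) * (Nat.choose (m+ν) α : ℂ) := by
    intro ν hν
    have hνM : m + ν ≤ M := by
      simp only [Finset.mem_range] at hν; omega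
    have h1 : (((x^2+y^2+z^2 : ℝ)):ℂ) = ((y:ℂ)^2 + (x:ℂ)^2) + (z:ℂ)^2 := by
      push_cast; ring
    rw [h1, add_pow,
      Finset.sum_subset (Finset.range_subset_range.2 (by omega : m+ν+1 ≤ M+1))
        (fun α _ hα => by
          have : m + ν < α := by simp only [Finset.mem_range] at hα ⊢; omega
          rw [Nat.choose_eq_zero_of_lt this]
          simp)]
    refine Finset.sum_congr rfl fun α hα => ?_
    have hαM : α ≤ M := by simp only [Finset.mem_range] at hα; omega
    rw [add_pow,
      Finset.sum_subset (Finset.range_subset_range.2 (by omega : α+1 ≤ M+1))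
        (fun β _ hβ => by
          have : α < β := by simp only [Finset.mem_range] at hβ ⊢; omega
          rw [Nat.choose_eq_zero_of_lt this]
          simp), Finset.sum_mul, Finset.sum_mul]
  have hsum : (∑ ν ∈ Finset.range (P+1),
        ((-1:ℂ)^ν * (Nat.factorial (2*p - 2*ν) : ℂ) /
          ((Nat.factorial ν : ℂ) * (Nat.factorial (p - ν) : ℂ) *
            (Nat.factorial (p - a - 2*ν) : ℂ))) *
          (((x^2+y^2+z^2 : ℝ)):ℂ)^(m+ν) * (z:ℂ)^(p - a - 2*ν))
      = ∑ ν ∈ Finset.range (P+1),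
        ((-1:ℂ)^ν * (Nat.factorial (2*p - 2*ν) : ℂ) /
          ((Nat.factorial ν : ℂ) * (Nat.factorial (p - ν) : ℂ) *
            (Nat.factorial (p - a - 2*ν) : ℂ))) *
          (∑ α ∈ Finset.range (M+1), ∑ β ∈ Finset.range (M+1),
            ((y:ℂ)^2)^β * ((x:ℂ)^2)^(α-β) * (Nat.choose α β : ℂ) *
              ((z:ℂ)^2)^(m+ν-α) * (Nat.choose (m+ν) α : ℂ)) * (z:ℂ)^(p - a - 2*ν) :=
    Finset.sum_congr rfl fun ν hν => by rw [hpow ν hν]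
  have step : ∀ (C0 U : ℂ) (B S : ℕ → ℂ) (n1 n2 : ℕ),
      C0 * (∑ j ∈ Finset.range n1, B j) * (∑ ν ∈ Finset.range n2, S ν) * U
        = ∑ j ∈ Finset.range n1, ∑ ν ∈ Finset.range n2, C0 * B j * S ν * U := by
    intros C0 U B S n1 n2
    simp only [Finset.mul_sum, Finset.sum_mul]
    exact Finset.sum_comm ..
  have step2 : ∀ (C0 U B cc Z : ℂ) (F : ℕ → ℕ → ℂ) (n : ℕ),
      C0 * B * (cc * (∑ α ∈ Finset.range n, ∑ β ∈ Finset.range n, F α β) * Z) * U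
        = ∑ α ∈ Finset.range n, ∑ β ∈ Finset.range n, C0 * B * (cc * F α β * Z) * U := by
    intros C0 U B cc Z F n
    simp only [Finset.mul_sum, Finset.sum_mul]
  unfold solidT Sidx Kcx E1x E2x E3x
  rw [← ha, ← hW, ← hP, hbin, hsum, step]
  conv_rhs => rw [Finset.sum_product]
  simp only [Finset.sum_product, step2]
  refine Finset.sum_congr rfl fun j hj => Finset.sum_congr rfl fun ν hν => ?_
  refine Finset.sum_congr rfl fun α hα => Finset.sum_congr rfl fun β hβ => ?_
  push_cast
  simp only [pow_add, pow_mul]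
  ring

lemma fact_dfact (p ν : ℕ) (hν : ν ≤ p) :
    Nat.factorial (2*p - 2*ν) * 2^ν
      = 2^p * Nat.factorial (p-ν) * Nat.doubleFactorial (2*p - 2*ν - 1) := by
  have h := nat_fact_dfact (p-ν)
  rw [show 2*(p-ν) = 2*p - 2*ν by omega] at h
  have h2 : (2:ℕ)^p = 2^ν * 2^(p-ν) := by rw [← pow_add, show ν + (p-ν) = p by omega]
  rw [h, h2]; ring

lemma Wsq (q : ℤ) : ((if 0 ≤ q then (1:ℂ) else -1) * Complex.I)^2 = -1 := by
  split_ifs <;> simp [mul_pow, Complex.I_sq]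

lemma phase_even {W : ℂ} (hW2 : W^2 = -1) (a μ : ℕ) (h : 2*μ ≤ a) :
    (-1:ℂ)^a * (-W)^(a - 2*μ) = (-1)^μ * W^a := by
  have h1 : W^a = (-1:ℂ)^μ * W^(a-2*μ) := by
    conv_lhs => rw [show a = 2*μ + (a - 2*μ) by omega]
    rw [pow_add, pow_mul, hW2]
  have e1 : (-1:ℂ)^a * (-1:ℂ)^(a - 2*μ) = 1 := by
    rw [← pow_add, show a + (a - 2*μ) = 2*(a-μ) by omega, pow_mul, neg_one_sq, one_pow]
  have e2 : (-1:ℂ)^μ * (-1:ℂ)^μ = 1 := by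
    rw [← pow_add, show μ + μ = 2*μ by omega, pow_mul, neg_one_sq, one_pow]
  rw [neg_pow W, h1, ← mul_assoc, ← mul_assoc, e1, e2]

lemma phase_odd {W : ℂ} (hW2 : W^2 = -1) (a μ : ℕ) (h : 2*μ+1 ≤ a) :
    (-1:ℂ)^a * (-W)^(a - (2*μ+1)) = (-1)^μ * W^(a+1) := by
  have h1 : W^(a+1) = (-1:ℂ)^(μ+1) * W^(a-(2*μ+1)) := by
    conv_lhs => rw [show a+1 = 2*(μ+1) + (a - (2*μ+1)) by omega]
    rw [pow_add, pow_mul, hW2]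
  have e1 : (-1:ℂ)^a * (-1:ℂ)^(a - (2*μ+1)) = -1 := by
    rw [← pow_add, show a + (a - (2*μ+1)) = 2*(a-μ-1)+1 by omega, pow_succ, pow_mul,
      neg_one_sq, one_pow, one_mul]
  have e2 : (-1:ℂ)^μ * (-1:ℂ)^(μ+1) = -1 := by
    rw [← pow_add, show μ + (μ+1) = 2*μ+1 by omega, pow_succ, pow_mul,
      neg_one_sq, one_pow, one_mul]
  rw [neg_pow W, h1, ← mul_assoc, ← mul_assoc, e1, e2]

lemma bcoef_cast (p : ℕ) (q : ℤ) (ν : ℕ) (hν : ν ≤ p) :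
    ((bcoef p q ν : ℝ) : ℂ)
      = (-1:ℂ)^ν * (Nat.factorial (2*p - 2*ν) : ℂ) /
        (2^p * (Nat.factorial ν : ℂ) * (Nat.factorial (p-ν) : ℂ) *
          (Nat.factorial (p - q.natAbs - 2*ν) : ℂ)) := by
  have h2 : (Nat.factorial (2*p - 2*ν) : ℂ) * 2^ν
      = 2^p * (Nat.factorial (p-ν) : ℂ) * (Nat.doubleFactorial (2*p - 2*ν - 1) : ℂ) := by
    exact_mod_cast fact_dfact p ν hν
  unfold bcoef
  push_cast
  have hfν : (Nat.factorial ν : ℂ) ≠ 0 := Nat.cast_ne_zero.2 (Nat.factorial_ne_zero _)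
  have hfpν : (Nat.factorial (p-ν) : ℂ) ≠ 0 := Nat.cast_ne_zero.2 (Nat.factorial_ne_zero _)
  have hfpa : (Nat.factorial (p - q.natAbs - 2*ν) : ℂ) ≠ 0 :=
    Nat.cast_ne_zero.2 (Nat.factorial_ne_zero _)
  have h2p : ((2:ℂ))^p ≠ 0 := pow_ne_zero _ two_ne_zero
  have h2ν : ((2:ℂ))^ν ≠ 0 := pow_ne_zero _ two_ne_zero
  field_simp
  linear_combination -h2

lemma Kcx_even (p m : ℕ) (q : ℤ) (μ ν α β : ℕ) (hμ : 2*μ ≤ q.natAbs) (hν : ν ≤ p) :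
    Kcx p m q ((2*μ, ν), (α, β))
      = ((if 0 ≤ q then (1:ℂ) else -1) * Complex.I)^q.natAbs *
        ((-1:ℂ)^μ * (Nat.choose q.natAbs (2*μ) : ℂ) * ((bcoef p q ν : ℝ) : ℂ) *
          (Nat.choose (m+ν) α : ℂ) * (Nat.choose α β : ℂ)) := by
  unfold Kcx
  dsimp only
  rw [bcoef_cast p q ν hν]
  linear_combination ((Nat.choose q.natAbs (2*μ) : ℂ) * ((-1:ℂ)^ν *
    (Nat.factorial (2*p - 2*ν) : ℂ)) * (Nat.choose (m+ν) α : ℂ) * (Nat.choose α β : ℂ) /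
    (2^p * (Nat.factorial ν : ℂ) * (Nat.factorial (p-ν) : ℂ) *
      (Nat.factorial (p - q.natAbs - 2*ν) : ℂ))) * phase_even (Wsq q) q.natAbs μ hμ

lemma Kcx_odd (p m : ℕ) (q : ℤ) (μ ν α β : ℕ) (hμ : 2*μ+1 ≤ q.natAbs) (hν : ν ≤ p) :
    Kcx p m q ((2*μ+1, ν), (α, β))
      = ((if 0 ≤ q then (1:ℂ) else -1) * Complex.I)^(q.natAbs+1) *
        ((-1:ℂ)^μ * (Nat.choose q.natAbs (2*μ+1) : ℂ) * ((bcoef p q ν : ℝ) : ℂ) *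
          (Nat.choose (m+ν) α : ℂ) * (Nat.choose α β : ℂ)) := by
  unfold Kcx
  dsimp only
  rw [bcoef_cast p q ν hν]
  linear_combination ((Nat.choose q.natAbs (2*μ+1) : ℂ) * ((-1:ℂ)^ν *
    (Nat.factorial (2*p - 2*ν) : ℂ)) * (Nat.choose (m+ν) α : ℂ) * (Nat.choose α β : ℂ) /
    (2^p * (Nat.factorial ν : ℂ) * (Nat.factorial (p-ν) : ℂ) *
      (Nat.factorial (p - q.natAbs - 2*ν) : ℂ))) * phase_odd (Wsq q) q.natAbs μ hμ

/-- the integral `I_m(p,q,k)` splits as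
`I_m = (s i)^{|q|} I_m^{(1)} + (s i)^{|q|+1} I_m^{(2)}`. -/
theorem solidI_eq_formula (φ : ℕ → Polynomial ℝ) (p m : ℕ) (q : ℤ) (hq : q.natAbs ≤ p)
    (k₁ k₂ k₃ : ℕ) :
    solidI φ p m q k₁ k₂ k₃
      = ((if 0 ≤ q then (1 : ℂ) else -1) * Complex.I) ^ q.natAbs *
          ((solidI1 φ p m q k₁ k₂ k₃ : ℝ) : ℂ)
        + ((if 0 ≤ q then (1 : ℂ) else -1) * Complex.I) ^ (q.natAbs + 1) *
          ((solidI2 φ p m q k₁ k₂ k₃ : ℝ) : ℂ) := by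
  have hm : ∀ (k l : ℕ), (∫ t in (-1:ℝ)..1, t ^ l * (φ k).eval t) = momentI φ k l :=
    fun _ _ => rfl
  unfold solidI
  simp only [solidT_expand]
  rw [triple_integral (Sidx p m q) (Kcx p m q) E1x (E2x q) (E3x p m q) (φ k₁) (φ k₂) (φ k₃)]
  simp only [hm]
  unfold Sidx
  rw [Finset.sum_product]
  simp only [Finset.sum_product, E1x, E2x, E3x]
  refine (sum_even_odd _ _).trans ?_
  rw [show (q.natAbs+1+1)/2 = q.natAbs/2+1 from by omega]
  have hI1 : ((if 0 ≤ q then (1:ℂ) else -1) * Complex.I) ^ q.natAbs *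
        ((solidI1 φ p m q k₁ k₂ k₃ : ℝ) : ℂ)
      = ∑ μ ∈ Finset.range (q.natAbs/2+1), ∑ ν ∈ Finset.range ((p - q.natAbs)/2+1),
          ∑ α ∈ Finset.range (m + ν + 1), ∑ β ∈ Finset.range (α + 1),
          ((if 0 ≤ q then (1:ℂ) else -1) * Complex.I) ^ q.natAbs *
            ((-1:ℂ)^μ * (Nat.choose q.natAbs (2*μ) : ℂ) * ((bcoef p q ν : ℝ) : ℂ) *
              (Nat.choose (m+ν) α : ℂ) *
              ((momentI φ k₃ (p - q.natAbs + 2*m - 2*α) : ℝ) : ℂ) *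
              (Nat.choose α β : ℂ) *
              ((momentI φ k₂ (q.natAbs + 2*β - 2*μ) : ℝ) : ℂ) *
              ((momentI φ k₁ (2*α - 2*β + 2*μ) : ℝ) : ℂ)) := by
    unfold solidI1
    push_cast
    simp only [Finset.mul_sum]
    refine Finset.sum_congr rfl fun μ _ => Finset.sum_congr rfl fun ν _ =>
      Finset.sum_congr rfl fun α _ => Finset.sum_congr rfl fun β _ => by ring
  have hI2 : ((if 0 ≤ q then (1:ℂ) else -1) * Complex.I) ^ (q.natAbs+1) *
        ((solidI2 φ p m q k₁ k₂ k₃ : ℝ) : ℂ)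
      = ∑ μ ∈ Finset.range ((q.natAbs+1)/2), ∑ ν ∈ Finset.range ((p - q.natAbs)/2+1),
          ∑ α ∈ Finset.range (m + ν + 1), ∑ β ∈ Finset.range (α + 1),
          ((if 0 ≤ q then (1:ℂ) else -1) * Complex.I) ^ (q.natAbs+1) *
            ((-1:ℂ)^μ * (Nat.choose q.natAbs (2*μ+1) : ℂ) * ((bcoef p q ν : ℝ) : ℂ) *
              (Nat.choose (m+ν) α : ℂ) *
              ((momentI φ k₃ (p - q.natAbs + 2*m - 2*α) : ℝ) : ℂ) *
              (Nat.choose α β : ℂ) *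
              ((momentI φ k₂ (q.natAbs + 2*β - 2*μ - 1) : ℝ) : ℂ) *
              ((momentI φ k₁ (2*α - 2*β + 2*μ + 1) : ℝ) : ℂ)) := by
    unfold solidI2
    push_cast
    simp only [Finset.mul_sum]
    refine Finset.sum_congr rfl fun μ _ => Finset.sum_congr rfl fun ν _ =>
      Finset.sum_congr rfl fun α _ => Finset.sum_congr rfl fun β _ => by ring
  rw [hI1, hI2]
  congr 1
  · -- even part
    refine Finset.sum_congr rfl fun μ hμ => ?_
    refine Finset.sum_congr rfl fun ν hν => ?_
    have hμ' : 2*μ ≤ q.natAbs := by have := Finset.mem_range.1 hμ; omega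
    have hν' : 2*ν ≤ p - q.natAbs := by have := Finset.mem_range.1 hν; omega
    have hνp : ν ≤ p := by omega
    calc ∑ α ∈ Finset.range (m + (p - q.natAbs)/2 + 1), ∑ β ∈ Finset.range (m + (p - q.natAbs)/2 + 1),
          Kcx p m q ((2*μ, ν), (α, β)) *
            ((momentI φ k₁ (2*μ + 2*(α - β)) : ℝ) : ℂ) *
            ((momentI φ k₂ ((q.natAbs - 2*μ) + 2*β) : ℝ) : ℂ) *
            ((momentI φ k₃ ((p - q.natAbs - 2*ν) + 2*(m + ν - α)) : ℝ) : ℂ)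
        = ∑ α ∈ Finset.range (m + ν + 1), ∑ β ∈ Finset.range (α + 1),
          Kcx p m q ((2*μ, ν), (α, β)) *
            ((momentI φ k₁ (2*μ + 2*(α - β)) : ℝ) : ℂ) *
            ((momentI φ k₂ ((q.natAbs - 2*μ) + 2*β) : ℝ) : ℂ) *
            ((momentI φ k₃ ((p - q.natAbs - 2*ν) + 2*(m + ν - α)) : ℝ) : ℂ) := by
          rw [← Finset.sum_subset (Finset.range_subset_range.2 (by omega : m + ν + 1 ≤ m + (p - q.natAbs)/2 + 1))
            (fun α _ hα => Finset.sum_eq_zero fun β _ => by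
              have h0 : Nat.choose (m+ν) α = 0 := Nat.choose_eq_zero_of_lt
                (by simp only [Finset.mem_range] at hα; omega)
              simp [Kcx, h0])]
          refine Finset.sum_congr rfl fun α hα => ?_
          rw [← Finset.sum_subset (Finset.range_subset_range.2
              (by simp only [Finset.mem_range] at hα; omega : α + 1 ≤ m + (p - q.natAbs)/2 + 1))
            (fun β _ hβ => by
              have h0 : Nat.choose α β = 0 := Nat.choose_eq_zero_of_lt
                (by simp only [Finset.mem_range] at hβ; omega)
              simp [Kcx, h0])]
      _ = _ := by
          refine Finset.sum_congr rfl fun α hα => Finset.sum_congr rfl fun β hβ => ?_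
          have hc1 : α ≤ m + ν := by simp only [Finset.mem_range] at hα; omega
          have hc2 : β ≤ α := by simp only [Finset.mem_range] at hβ; omega
          rw [show 2*μ + 2*(α - β) = 2*α - 2*β + 2*μ by omega,
            show (q.natAbs - 2*μ) + 2*β = q.natAbs + 2*β - 2*μ by omega,
            show (p - q.natAbs - 2*ν) + 2*(m + ν - α) = p - q.natAbs + 2*m - 2*α by omega,
            Kcx_even p m q μ ν α β hμ' hνp]
          ring
  · -- odd part
    refine Finset.sum_congr rfl fun μ hμ => ?_
    refine Finset.sum_congr rfl fun ν hν => ?_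
    have hμ' : 2*μ + 1 ≤ q.natAbs := by have := Finset.mem_range.1 hμ; omega
    have hν' : 2*ν ≤ p - q.natAbs := by have := Finset.mem_range.1 hν; omega
    have hνp : ν ≤ p := by omega
    calc ∑ α ∈ Finset.range (m + (p - q.natAbs)/2 + 1), ∑ β ∈ Finset.range (m + (p - q.natAbs)/2 + 1),
          Kcx p m q ((2*μ+1, ν), (α, β)) *
            ((momentI φ k₁ ((2*μ+1) + 2*(α - β)) : ℝ) : ℂ) *
            ((momentI φ k₂ ((q.natAbs - (2*μ+1)) + 2*β) : ℝ) : ℂ) *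
            ((momentI φ k₃ ((p - q.natAbs - 2*ν) + 2*(m + ν - α)) : ℝ) : ℂ)
        = ∑ α ∈ Finset.range (m + ν + 1), ∑ β ∈ Finset.range (α + 1),
          Kcx p m q ((2*μ+1, ν), (α, β)) *
            ((momentI φ k₁ ((2*μ+1) + 2*(α - β)) : ℝ) : ℂ) *
            ((momentI φ k₂ ((q.natAbs - (2*μ+1)) + 2*β) : ℝ) : ℂ) *
            ((momentI φ k₃ ((p - q.natAbs - 2*ν) + 2*(m + ν - α)) : ℝ) : ℂ) := by
          rw [← Finset.sum_subset (Finset.range_subset_range.2 (by omega : m + ν + 1 ≤ m + (p - q.natAbs)/2 + 1))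
            (fun α _ hα => Finset.sum_eq_zero fun β _ => by
              have h0 : Nat.choose (m+ν) α = 0 := Nat.choose_eq_zero_of_lt
                (by simp only [Finset.mem_range] at hα; omega)
              simp [Kcx, h0])]
          refine Finset.sum_congr rfl fun α hα => ?_
          rw [← Finset.sum_subset (Finset.range_subset_range.2
              (by simp only [Finset.mem_range] at hα; omega : α + 1 ≤ m + (p - q.natAbs)/2 + 1))
            (fun β _ hβ => by
              have h0 : Nat.choose α β = 0 := Nat.choose_eq_zero_of_lt
                (by simp only [Finset.mem_range] at hβ; omega)
              simp [Kcx, h0])]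
      _ = _ := by
          refine Finset.sum_congr rfl fun α hα => Finset.sum_congr rfl fun β hβ => ?_
          have hc1 : α ≤ m + ν := by simp only [Finset.mem_range] at hα; omega
          have hc2 : β ≤ α := by simp only [Finset.mem_range] at hβ; omega
          rw [show (2*μ+1) + 2*(α - β) = 2*α - 2*β + 2*μ + 1 by omega,
            show (q.natAbs - (2*μ+1)) + 2*β = q.natAbs + 2*β - 2*μ - 1 by omega,
            show (p - q.natAbs - 2*ν) + 2*(m + ν - α) = p - q.natAbs + 2*m - 2*α by omega,
            Kcx_odd p m q μ ν α β hμ' hνp]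
          ring
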